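/- Let G be a group, H a subgroup, and D an abelian H-invariant subgroup of G (i.e., H normalizes D). If every subgroup S with H ≤ S ≤ G satisfies N_G(S) = S, then H is abnormal in the subgroup HD. -/

import Mathlib

/-- The conjugate subgroup `H^g = g⁻¹Hg`. -/
def conjSub {G : Type*} [Group G] (g : G) (H : Subgroup G) : Subgroup G :=
  H.map (MulAut.conj g⁻¹).toMonoidHom

/-- `H` is abnormal in `G`: `g ∈ ⟨H, H^g⟩` for every `g ∈ G`. -/
def IsAbnormal {G : Type*} [Group G] (H : Subgroup G) : Prop :=
  ∀ g : G, g ∈ H ⊔ conjSub g H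

/-- `H` is abnormal in the subgroup `B`: `H ≤ B` and `g ∈ ⟨H, H^g⟩` for every `g ∈ B`. -/
def IsAbnormalIn {G : Type*} [Group G] (H B : Subgroup G) : Prop :=
  H ≤ B ∧ ∀ g ∈ B, g ∈ H ⊔ conjSub g H

theorem abnormal_in_join_abelian {G : Type*} [Group G] (H D : Subgroup G)
    (hDab : ∀ x ∈ D, ∀ y ∈ D, x * y = y * x)
    (hinv : ∀ h ∈ H, ∀ d ∈ D, h * d * h⁻¹ ∈ D)
    (hself : ∀ S : Subgroup G, H ≤ S → Subgroup.normalizer (S : Set G) = S) :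
    IsAbnormalIn H (H ⊔ D) := by
  -- every element of H ⊔ D is of the form h * d
  have hdecomp : ∀ g ∈ H ⊔ D, ∃ h ∈ H, ∃ d ∈ D, g = h * d := by
    intro g hg
    let E : Subgroup G :=
      { carrier := {g | ∃ h ∈ H, ∃ d ∈ D, g = h * d}
        one_mem' := ⟨1, H.one_mem, 1, D.one_mem, by group⟩
        mul_mem' := by
          rintro a b ⟨h1, hh1, d1, hd1, rfl⟩ ⟨h2, hh2, d2, hd2, rfl⟩
          refine ⟨h1 * h2, mul_mem hh1 hh2, (h2⁻¹ * d1 * h2) * d2, mul_mem ?_ hd2, by group⟩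
          have := hinv h2⁻¹ (inv_mem hh2) d1 hd1
          rwa [inv_inv] at this
        inv_mem' := by
          rintro a ⟨h1, hh1, d1, hd1, rfl⟩
          exact ⟨h1⁻¹, inv_mem hh1, h1 * d1⁻¹ * h1⁻¹, hinv h1 hh1 d1⁻¹ (inv_mem hd1), by group⟩ }
    have hle : H ⊔ D ≤ E := sup_le
      (fun x hx => ⟨x, hx, 1, D.one_mem, (mul_one x).symm⟩)
      (fun x hx => ⟨1, H.one_mem, x, hx, (one_mul x).symm⟩)
    exact hle hg
  refine ⟨le_sup_left, ?_⟩
  intro g hg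
  obtain ⟨h, hh, d, hd, rfl⟩ := hdecomp g hg
  set S := H ⊔ conjSub (h * d) H with hSdef
  have hHS : H ≤ S := le_sup_left
  -- d⁻¹ x d ∈ S for x ∈ H
  have hconj : ∀ x ∈ H, d⁻¹ * x * d ∈ S := by
    intro x hx
    have : d⁻¹ * x * d ∈ conjSub (h * d) H := by
      refine Subgroup.mem_map.mpr ⟨h * x * h⁻¹, mul_mem (mul_mem hh hx) (inv_mem hh), ?_⟩
      simp [MulAut.conj_apply]
      group
    exact (le_sup_right : conjSub (h * d) H ≤ S) this
  -- the commutator c = x⁻¹ d⁻¹ x d is in S and in D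
  have hcS : ∀ x ∈ H, x⁻¹ * d⁻¹ * x * d ∈ S := by
    intro x hx
    have h1 : x⁻¹ ∈ S := hHS (inv_mem hx)
    have h2 : d⁻¹ * x * d ∈ S := hconj x hx
    have := mul_mem h1 h2
    have heq : x⁻¹ * (d⁻¹ * x * d) = x⁻¹ * d⁻¹ * x * d := by group
    rwa [heq] at this
  have hcD : ∀ x ∈ H, x⁻¹ * d⁻¹ * x * d ∈ D := by
    intro x hx
    have h1 : x⁻¹ * d⁻¹ * x ∈ D := by
      have := hinv x⁻¹ (inv_mem hx) d⁻¹ (inv_mem hd)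
      rwa [inv_inv] at this
    exact mul_mem h1 hd
  -- forward conjugation: d S d⁻¹ ≤ S
  have fwd : ∀ y ∈ S, d * y * d⁻¹ ∈ S := by
    suffices hle : S ≤ Subgroup.comap (MulAut.conj d).toMonoidHom S by
      intro y hy
      have := hle hy
      simpa [Subgroup.mem_comap, MulAut.conj_apply, mul_assoc] using this
    refine sup_le ?_ ?_
    · intro x hx
      simp only [Subgroup.mem_comap, MulEquiv.coe_toMonoidHom, MulAut.conj_apply]
      -- d x d⁻¹ = x * (x⁻¹ d⁻¹ x d)⁻¹ * (stuff)? use commutation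
      have he : x⁻¹ * d * x ∈ D := by
        have := hinv x⁻¹ (inv_mem hx) d hd
        rwa [inv_inv] at this
      have hcomm : (x⁻¹ * d * x) * d⁻¹ = d⁻¹ * (x⁻¹ * d * x) :=
        (Commute.inv_right (hDab _ he d hd : Commute (x⁻¹ * d * x) d))
      have heq : d * x * d⁻¹ = x * ((x⁻¹ * d * x) * d⁻¹) := by group
      rw [heq, hcomm]
      have heq2 : x * (d⁻¹ * (x⁻¹ * d * x)) = x * (x⁻¹ * d⁻¹ * x * d)⁻¹ := by group
      rw [heq2]
      exact mul_mem (hHS hx) (inv_mem (hcS x hx))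
    · intro z hz
      obtain ⟨y, hy, rfl⟩ := Subgroup.mem_map.mp hz
      simp only [Subgroup.mem_comap, MulEquiv.coe_toMonoidHom, MulAut.conj_apply]
      have heq : d * ((h * d)⁻¹ * y * (h * d)⁻¹⁻¹) * d⁻¹ = h⁻¹ * y * h := by group
      rw [heq]
      exact hHS (mul_mem (mul_mem (inv_mem hh) hy) hh)
  -- backward conjugation: d⁻¹ S d ≤ S
  have bwd : ∀ y ∈ S, d⁻¹ * y * d ∈ S := by
    suffices hle : S ≤ Subgroup.comap (MulAut.conj d⁻¹).toMonoidHom S by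
      intro y hy
      have := hle hy
      simpa [Subgroup.mem_comap, MulAut.conj_apply, mul_assoc] using this
    refine sup_le ?_ ?_
    · intro x hx
      simp only [Subgroup.mem_comap, MulEquiv.coe_toMonoidHom, MulAut.conj_apply, inv_inv]
      exact hconj x hx
    · intro z hz
      obtain ⟨y, hy, rfl⟩ := Subgroup.mem_map.mp hz
      simp only [Subgroup.mem_comap, MulEquiv.coe_toMonoidHom, MulAut.conj_apply, inv_inv]
      set x := h⁻¹ * y * h with hxdef
      have hx : x ∈ H := mul_mem (mul_mem (inv_mem hh) hy) hh
      set c := x⁻¹ * d⁻¹ * x * d with hcdef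
      have hcomm : c * d = d * c := hDab c (hcD x hx) d hd
      have hdcd : d⁻¹ * c * d = c := by
        rw [mul_assoc, hcomm, ← mul_assoc, inv_mul_cancel, one_mul]
      have heq : d⁻¹ * ((h * d)⁻¹ * y * (h * d)) * d = x * c * (d⁻¹ * c * d) := by
        simp only [hcdef, hxdef]
        group
      rw [heq, hdcd]
      exact mul_mem (mul_mem (hHS hx) (hcS x hx)) (hcS x hx)
  -- d normalizes S, hence d ∈ S
  have hdS : d ∈ S := by
    rw [← hself S hHS, Subgroup.mem_normalizer_iff]
    intro y
    constructor
    · exact fun hy => fwd y hy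
    · intro hy
      have := bwd _ hy
      have heq : d⁻¹ * (d * y * d⁻¹) * d = y := by group
      rwa [heq] at this
  exact mul_mem (hHS hh) hdS
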